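/- arXiv:2106.03731 — 2 statements merged into one kernel-verified Lean document; each statement's English description precedes it below -/
import Mathlib

section
/- Let A, B, C ≥ 0, D ∈ ℝ, ρ, γ ∈ (0,1], and define f(t,y,z) = A - B·sgn(y)·|y| - C·sgn(y)·|y|^ρ·|z|^γ + D·y·|z|^γ. Then for all t ≥ 0, z ∈ ℝ, and y₁, y₂ ∈ ℝ, (y₁ - y₂)(f(t,y₁,z) - f(t,y₂,z)) ≤ |D|·(1 + |z|)·(y₁ - y₂)². -/
noncomputable def sgn' (y : ℝ) : ℝ := if 0 ≤ y then 1 else -1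

lemma sgn'_mul_abs (y : ℝ) : sgn' y * |y| = y := by
  unfold sgn'
  rcases le_or_gt 0 y with h | h
  · rw [if_pos h, abs_of_nonneg h, one_mul]
  · rw [if_neg (not_le.2 h), abs_of_neg h]; ring

lemma sgn'_rpow_mono (ρ : ℝ) (hρ0 : 0 < ρ) :
    Monotone (fun y : ℝ => sgn' y * |y| ^ ρ) := by
  intro a b hab
  simp only [sgn']
  rcases le_or_gt 0 a with ha | ha
  · rw [if_pos ha, if_pos (ha.trans hab), one_mul, one_mul]
    exact Real.rpow_le_rpow (abs_nonneg a)
      (by rw [abs_of_nonneg ha, abs_of_nonneg (ha.trans hab)]; exact hab) hρ0.le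
  · rw [if_neg (not_le.2 ha)]
    rcases le_or_gt 0 b with hb | hb
    · rw [if_pos hb, one_mul]
      nlinarith [Real.rpow_nonneg (abs_nonneg a) ρ, Real.rpow_nonneg (abs_nonneg b) ρ]
    · rw [if_neg (not_le.2 hb)]
      have h : |b| ≤ |a| := by rw [abs_of_neg ha, abs_of_neg hb]; linarith
      nlinarith [Real.rpow_le_rpow (abs_nonneg b) h hρ0.le]

theorem metal_one_sided_lipschitz (A B C D ρ γ : ℝ)
    (hA : 0 ≤ A) (hB : 0 ≤ B) (hC : 0 ≤ C)
    (hρ0 : 0 < ρ) (hρ1 : ρ ≤ 1) (hγ0 : 0 < γ) (hγ1 : γ ≤ 1)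
    (f : ℝ → ℝ → ℝ → ℝ)
    (hf : ∀ t y z, f t y z =
      A - B * sgn' y * |y| - C * sgn' y * |y| ^ ρ * |z| ^ γ + D * y * |z| ^ γ)
    (t z y₁ y₂ : ℝ) (ht : 0 ≤ t) :
    (y₁ - y₂) * (f t y₁ z - f t y₂ z) ≤ |D| * (1 + |z|) * (y₁ - y₂) ^ 2 := by
  rw [hf, hf]
  have hz0 : 0 ≤ |z| ^ γ := Real.rpow_nonneg (abs_nonneg z) γ
  have hz : |z| ^ γ ≤ 1 + |z| := by
    rcases le_or_gt (|z|) 1 with h | h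
    · have := Real.rpow_le_one (abs_nonneg z) h hγ0.le
      linarith [abs_nonneg z]
    · calc |z| ^ γ ≤ |z| ^ (1 : ℝ) := Real.rpow_le_rpow_of_exponent_le h.le hγ1
        _ = |z| := Real.rpow_one _
        _ ≤ 1 + |z| := by linarith
  have e1 : B * sgn' y₁ * |y₁| = B * y₁ := by rw [mul_assoc, sgn'_mul_abs]
  have e2 : B * sgn' y₂ * |y₂| = B * y₂ := by rw [mul_assoc, sgn'_mul_abs]
  rw [e1, e2]
  have hg : 0 ≤ (y₁ - y₂) * (sgn' y₁ * |y₁| ^ ρ - sgn' y₂ * |y₂| ^ ρ) := by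
    rcases le_total y₂ y₁ with h | h
    · have := sgn'_rpow_mono ρ hρ0 h
      simp only at this
      nlinarith
    · have := sgn'_rpow_mono ρ hρ0 h
      simp only at this
      nlinarith
  have hD : D * |z| ^ γ ≤ |D| * (1 + |z|) :=
    le_trans (mul_le_mul_of_nonneg_right (le_abs_self D) hz0)
      (mul_le_mul_of_nonneg_left hz (abs_nonneg D))
  nlinarith [mul_nonneg (mul_nonneg hC hz0) hg, sq_nonneg (y₁ - y₂),
    mul_le_mul_of_nonneg_right hD (sq_nonneg (y₁ - y₂)),
    mul_nonneg hB (sq_nonneg (y₁ - y₂))]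
end

section
/- Let a < b, H ∈ ℝ, and let g : [a,b] × ℝ^d → ℝ^d satisfy ⟨y₁ - y₂, g(t,y₁) - g(t,y₂)⟩ ≤ H‖y₁ - y₂‖² for all t ∈ [a,b], y₁, y₂ ∈ ℝ^d. If z, u : [a,b] → ℝ^d are C¹ solutions of the ODE with initial values z(a) = ξ and u(a) = ζ, then for all t ∈ [a,b], ‖u(t) - z(t)‖ ≤ e^{max(H,0)·(b-a)}·‖ξ - ζ‖. -/
open scoped RealInnerProductSpace

theorem ode_continuous_dependence (d : ℕ) (a b H : ℝ) (hab : a < b)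
    (g : ℝ → EuclideanSpace ℝ (Fin d) → EuclideanSpace ℝ (Fin d))
    (hg : ∀ t ∈ Set.Icc a b, ∀ y₁ y₂,
      ⟪y₁ - y₂, g t y₁ - g t y₂⟫ ≤ H * ‖y₁ - y₂‖ ^ 2)
    (ξ ζ : EuclideanSpace ℝ (Fin d))
    (z u : ℝ → EuclideanSpace ℝ (Fin d))
    (hz : ∀ t ∈ Set.Icc a b, HasDerivAt z (g t (z t)) t)
    (hu : ∀ t ∈ Set.Icc a b, HasDerivAt u (g t (u t)) t)
    (hza : z a = ξ) (hua : u a = ζ) :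
    ∀ t ∈ Set.Icc a b,
      ‖u t - z t‖ ≤ Real.exp (max H 0 * (b - a)) * ‖ξ - ζ‖ := by
  set Hp := max H 0 with hHp
  have hHp0 : 0 ≤ Hp := le_max_right _ _
  set v : ℝ → EuclideanSpace ℝ (Fin d) := fun t => u t - z t with hv
  set w : ℝ → EuclideanSpace ℝ (Fin d) := fun t => g t (u t) - g t (z t) with hw
  have hvd : ∀ t ∈ Set.Icc a b, HasDerivAt v (w t) t := fun t ht =>
    (hu t ht).sub (hz t ht)
  set f : ℝ → ℝ := fun t => ⟪v t, v t⟫ with hf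
  set f' : ℝ → ℝ := fun t => ⟪v t, w t⟫ + ⟪w t, v t⟫ with hf'
  have hfd : ∀ t ∈ Set.Icc a b, HasDerivAt f (f' t) t := fun t ht =>
    (hvd t ht).inner ℝ (hvd t ht)
  have key : ∀ t ∈ Set.Icc a b, f t ≤ ‖ξ - ζ‖ ^ 2 * Real.exp (2 * Hp * (t - a)) := by
    have := le_gronwallBound_of_liminf_deriv_right_le (f := f) (f' := f')
      (δ := ‖ξ - ζ‖ ^ 2) (K := 2 * Hp) (ε := 0) (a := a) (b := b)
      (fun t ht => ((hfd t ht).continuousAt).continuousWithinAt)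
      (fun t ht r hr =>
        ((hfd t (Set.mem_Icc.2 ⟨ht.1, ht.2.le⟩)).hasDerivWithinAt).liminf_right_slope_le hr)
      (le_of_eq (by simp only [hf, hv, hza, hua, real_inner_self_eq_norm_sq,
        norm_sub_rev ζ ξ]))
      (fun t ht => by
        have h1 : ⟪v t, w t⟫ ≤ H * ‖v t‖ ^ 2 :=
          hg t (Set.mem_Icc.2 ⟨ht.1, ht.2.le⟩) (u t) (z t)
        have h2 : ⟪w t, v t⟫ = ⟪v t, w t⟫ := real_inner_comm _ _
        have h3 : H * ‖v t‖ ^ 2 ≤ Hp * ‖v t‖ ^ 2 :=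
          mul_le_mul_of_nonneg_right (le_max_left _ _) (by positivity)
        have h4 : f t = ‖v t‖ ^ 2 := real_inner_self_eq_norm_sq _
        simp only [hf', h2, h4]
        nlinarith)
    intro t ht
    simpa [gronwallBound_ε0] using this t ht
  intro t ht
  have h5 := key t ht
  have h6 : f t = ‖v t‖ ^ 2 := real_inner_self_eq_norm_sq _
  have h7 : Real.exp (2 * Hp * (t - a)) ≤ (Real.exp (Hp * (b - a))) ^ 2 := by
    rw [← Real.exp_nat_mul]
    apply Real.exp_le_exp.2
    have h : t - a ≤ b - a := by linarith [ht.2]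
    push_cast
    nlinarith [ht.1, hHp0]
  have h8 : ‖v t‖ ^ 2 ≤ (Real.exp (Hp * (b - a)) * ‖ξ - ζ‖) ^ 2 := by
    rw [mul_pow]
    calc ‖v t‖ ^ 2 ≤ ‖ξ - ζ‖ ^ 2 * Real.exp (2 * Hp * (t - a)) := h6 ▸ h5
      _ ≤ ‖ξ - ζ‖ ^ 2 * (Real.exp (Hp * (b - a))) ^ 2 :=
        mul_le_mul_of_nonneg_left h7 (by positivity)
      _ = Real.exp (Hp * (b - a)) ^ 2 * ‖ξ - ζ‖ ^ 2 := by ring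
  have h9 := Real.sqrt_le_sqrt h8
  rwa [Real.sqrt_sq (norm_nonneg _), Real.sqrt_sq (by positivity)] at h9
end
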